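/- Let A be a finite set, H a real-valued function on subsets of A with H(∅) = 0, and σ a positive real scale for each a ∈ A. Define I(S) = −∑_{T ⊆ S} (−1)^{|T|} H(T ∪ (A∖S)) and s(S) = ∑_{a∈S} σ(a) for nonempty S ⊆ A, and the complexity profile C(y) = ∑_{S nonempty, s(S) ≥ y} I(S) for y ≥ 0. Then the area under the complexity profile equals the total scale-weighted information: ∫_0^∞ C(y) dy = ∑_{a∈A} σ(a)·H({a}). -/

import Mathlib

open Finset MeasureTheory

/-- The shared information of the irreducible dependency that includes the components
in `S` and excludes those in `A \ S`:
`I(S) = −∑_{T ⊆ S} (−1)^{|T|} H(T ∪ (A∖S))`. -/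
noncomputable def sharedInfo {α : Type*} [DecidableEq α]
    (A : Finset α) (H : Finset α → ℝ) (S : Finset α) : ℝ :=
  -∑ T ∈ S.powerset, (-1 : ℝ) ^ T.card * H (T ∪ (A \ S))

/-- The complexity profile: `C(y)` is the total shared information in dependencies of
scale `y` or higher, `C(y) = ∑_{S ⊆ A nonempty, s(S) ≥ y} I(S)`. -/
noncomputable def complexityProfile {α : Type*} [DecidableEq α]
    (A : Finset α) (H : Finset α → ℝ) (σ : α → ℝ) (y : ℝ) : ℝ :=
  ∑ S ∈ A.powerset.filter (fun S => S ≠ ∅ ∧ y ≤ ∑ a ∈ S, σ a), sharedInfo A H S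

/-- Alternating sum over supersets of `B` inside `A`. -/
lemma sum_filter_superset_pow {α : Type*} [DecidableEq α]
    (A B : Finset α) (hBA : B ⊆ A) :
    ∑ S ∈ A.powerset.filter (fun S => B ⊆ S), (-1 : ℝ) ^ S.card =
      if B = A then (-1 : ℝ) ^ A.card else 0 := by
  have h1 : ∑ S ∈ A.powerset.filter (fun S => B ⊆ S), (-1 : ℝ) ^ S.card
      = ∑ R ∈ (A \ B).powerset, (-1 : ℝ) ^ B.card * (-1 : ℝ) ^ R.card := by
    apply Finset.sum_nbij' (fun S => S \ B) (fun R => B ∪ R)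
    · intro S hS
      simp only [mem_filter, mem_powerset] at hS ⊢
      exact sdiff_subset_sdiff hS.1 le_rfl
    · intro R hR
      simp only [mem_powerset] at hR
      simp only [mem_filter, mem_powerset]
      exact ⟨union_subset hBA ((hR.trans (sdiff_subset))), subset_union_left⟩
    · intro S hS
      simp only [mem_filter, mem_powerset] at hS
      exact union_sdiff_of_subset hS.2
    · intro R hR
      simp only [mem_powerset] at hR
      exact union_sdiff_cancel_left (Finset.disjoint_sdiff.mono_right hR)
    · intro S hS
      simp only [mem_filter, mem_powerset] at hS
      rw [← pow_add]
      congr 1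
      rw [add_comm, card_sdiff_add_card_eq_card hS.2]
  rw [h1, ← Finset.mul_sum]
  have h2 : ∑ R ∈ (A \ B).powerset, (-1 : ℝ) ^ R.card
      = if A \ B = ∅ then 1 else 0 := by
    exact_mod_cast Finset.sum_powerset_neg_one_pow_card (x := A \ B)
  rw [h2]
  by_cases hAB : B = A
  · subst hAB
    simp
  · rw [if_neg, if_neg hAB, mul_zero]
    intro h
    exact hAB (subset_antisymm hBA (sdiff_eq_empty_iff_subset.mp h))

lemma sharedInfo_eq {α : Type*} [DecidableEq α]
    (A : Finset α) (H : Finset α → ℝ) {S : Finset α} (hS : S ⊆ A) :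
    sharedInfo A H S
      = -∑ T ∈ S.powerset, (-1:ℝ)^S.card * ((-1:ℝ)^T.card * H (A \ T)) := by
  unfold sharedInfo
  congr 1
  apply Finset.sum_nbij' (fun T => S \ T) (fun T => S \ T)
  · intro T hT; simp only [mem_powerset] at *; exact sdiff_subset
  · intro T hT; simp only [mem_powerset] at *; exact sdiff_subset
  · intro T hT; simp only [mem_powerset] at hT; exact Finset.sdiff_sdiff_eq_self hT
  · intro T hT; simp only [mem_powerset] at hT; exact Finset.sdiff_sdiff_eq_self hT
  · intro T hT
    simp only [mem_powerset] at hT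
    have hset : T ∪ (A \ S) = A \ (S \ T) := by
      ext x
      simp only [mem_union, mem_sdiff]
      constructor
      · rintro (hx | ⟨hxA, hxS⟩)
        · exact ⟨hS (hT hx), fun h => h.2 hx⟩
        · exact ⟨hxA, fun h => hxS h.1⟩
      · rintro ⟨hxA, hx⟩
        by_cases hxS : x ∈ S
        · left; by_contra hxT; exact hx ⟨hxS, hxT⟩
        · right; exact ⟨hxA, hxS⟩
    rw [hset]
    have h1 : (-1:ℝ)^(S\T).card * (-1:ℝ)^T.card = (-1:ℝ)^S.card := by
      rw [← pow_add, card_sdiff_add_card_eq_card hT]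
    have h2 : (-1:ℝ)^(S\T).card * (-1:ℝ)^(S\T).card = 1 := by
      rw [← mul_pow]; norm_num
    have h3 : (-1:ℝ)^T.card = (-1:ℝ)^S.card * (-1:ℝ)^(S\T).card := by
      linear_combination ((-1:ℝ)^(S\T).card) * h1 - ((-1:ℝ)^T.card) * h2
    rw [h3]; ring

lemma sum_sharedInfo_mem {α : Type*} [DecidableEq α]
    (A : Finset α) (H : Finset α → ℝ) (hH0 : H ∅ = 0) {a : α} (ha : a ∈ A) :
    ∑ S ∈ A.powerset.filter (fun S => a ∈ S), sharedInfo A H S = H {a} := by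
  have hrw : ∑ S ∈ A.powerset.filter (fun S => a ∈ S), sharedInfo A H S
      = ∑ S ∈ A.powerset.filter (fun S => a ∈ S),
          -∑ T ∈ S.powerset, (-1:ℝ)^S.card * ((-1:ℝ)^T.card * H (A \ T)) :=
    Finset.sum_congr rfl fun S hS =>
      sharedInfo_eq A H (mem_powerset.mp (mem_filter.mp hS).1)
  rw [hrw, Finset.sum_neg_distrib]
  have hswap : ∑ S ∈ A.powerset.filter (fun S => a ∈ S), ∑ T ∈ S.powerset,
        (-1:ℝ)^S.card * ((-1:ℝ)^T.card * H (A \ T))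
      = ∑ T ∈ A.powerset, ∑ S ∈ A.powerset.filter (fun S => insert a T ⊆ S),
        (-1:ℝ)^S.card * ((-1:ℝ)^T.card * H (A \ T)) := by
    apply Finset.sum_comm'
    intro S T
    simp only [mem_filter, mem_powerset, insert_subset_iff]
    constructor
    · rintro ⟨⟨hSA, haS⟩, hTS⟩; exact ⟨⟨hSA, haS, hTS⟩, hTS.trans hSA⟩
    · rintro ⟨⟨hSA, haS, hTS⟩, _⟩; exact ⟨⟨hSA, haS⟩, hTS⟩
  rw [hswap]
  have hinner : ∀ T ∈ A.powerset,
      ∑ S ∈ A.powerset.filter (fun S => insert a T ⊆ S),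
        (-1:ℝ)^S.card * ((-1:ℝ)^T.card * H (A \ T))
      = (if insert a T = A then (-1:ℝ)^A.card else 0) * ((-1:ℝ)^T.card * H (A \ T)) := by
    intro T hT
    rw [← Finset.sum_mul, sum_filter_superset_pow A _ (insert_subset ha (mem_powerset.mp hT))]
  rw [Finset.sum_congr rfl hinner]
  have hite : ∀ T ∈ A.powerset,
      (if insert a T = A then (-1:ℝ)^A.card else 0) * ((-1:ℝ)^T.card * H (A \ T))
      = if insert a T = A then (-1:ℝ)^A.card * ((-1:ℝ)^T.card * H (A \ T)) else 0 := by
    intro T _; split_ifs <;> simp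
  rw [Finset.sum_congr rfl hite, ← Finset.sum_filter]
  have hfil : A.powerset.filter (fun T => insert a T = A) = {A \ {a}, A} := by
    ext T
    simp only [mem_filter, mem_powerset, mem_insert, mem_singleton]
    constructor
    · rintro ⟨hTA, hins⟩
      by_cases haT : a ∈ T
      · right; rw [← hins, insert_eq_self.mpr haT]
      · left
        apply subset_antisymm
        · intro x hx
          simp only [mem_sdiff, mem_singleton]
          exact ⟨hTA hx, fun h => haT (h ▸ hx)⟩
        · intro x hx
          simp only [mem_sdiff, mem_singleton] at hx
          have hx1 : x ∈ insert a T := by rw [hins]; exact hx.1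
          rcases mem_insert.mp hx1 with h | h
          · exact absurd h hx.2
          · exact h
    · rintro (rfl | rfl)
      · refine ⟨sdiff_subset, ?_⟩
        rw [sdiff_singleton_eq_erase, insert_erase ha]
      · exact ⟨subset_rfl, insert_eq_self.mpr ha⟩
  rw [hfil]
  have hne : A \ {a} ≠ A := by
    intro h
    have : a ∈ A \ {a} := h.symm ▸ ha
    simp at this
  rw [Finset.sum_pair hne]
  have h1 : A \ (A \ {a}) = {a} := Finset.sdiff_sdiff_eq_self (singleton_subset_iff.mpr ha)
  have hcard : (A \ {a}).card = A.card - 1 := by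
    rw [card_sdiff_of_subset (singleton_subset_iff.mpr ha), card_singleton]
  have hpos : 1 ≤ A.card := card_pos.mpr ⟨a, ha⟩
  have hsign : (-1:ℝ)^A.card * (-1:ℝ)^(A.card - 1) = -1 := by
    rw [← pow_add]
    exact Odd.neg_one_pow ⟨A.card - 1, by omega⟩
  rw [h1, hcard, sdiff_self, bot_eq_empty, hH0]
  linear_combination (-H {a}) * hsign


/-- Conservation law for the complexity profile: the area under `C` equals the total
scale-weighted information, `∫_0^∞ C(y) dy = ∑_{a∈A} σ(a)·H({a})`. -/
theorem complexityProfile_integral {α : Type*} [DecidableEq α]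
    (A : Finset α) (H : Finset α → ℝ) (σ : α → ℝ)
    (hH0 : H ∅ = 0) (hσ : ∀ a ∈ A, 0 < σ a) :
    ∫ y in Set.Ioi (0 : ℝ), complexityProfile A H σ y = ∑ a ∈ A, σ a * H {a} := by
  have hs0 : ∀ S ∈ A.powerset, (0:ℝ) ≤ ∑ a ∈ S, σ a := fun S hS =>
    Finset.sum_nonneg fun a haS => (hσ a (mem_powerset.mp hS haS)).le
  have hCeq : Set.EqOn (complexityProfile A H σ)
      (fun y => ∑ S ∈ A.powerset,
        Set.indicator (Set.Ioc 0 (∑ a ∈ S, σ a)) (fun _ => sharedInfo A H S) y)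
      (Set.Ioi 0) := by
    intro y hy
    have hy0 : (0:ℝ) < y := hy
    unfold complexityProfile
    rw [Finset.sum_filter]
    apply Finset.sum_congr rfl
    intro S _
    rw [Set.indicator_apply]
    by_cases hS0 : S = ∅
    · subst hS0
      rw [if_neg (by simp), if_neg]
      intro h
      exact absurd (Set.mem_Ioc.mp h).2 (not_le.mpr (by simpa using hy0))
    · by_cases hle : y ≤ ∑ a ∈ S, σ a
      · rw [if_pos ⟨hS0, hle⟩, if_pos (Set.mem_Ioc.mpr ⟨hy0, hle⟩)]
      · rw [if_neg (fun h => hle h.2), if_neg (fun h => hle (Set.mem_Ioc.mp h).2)]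
  rw [setIntegral_congr_fun measurableSet_Ioi hCeq]
  have hint : ∀ S ∈ A.powerset, Integrable
      (fun y => Set.indicator (Set.Ioc 0 (∑ a ∈ S, σ a)) (fun _ => sharedInfo A H S) y)
      (volume.restrict (Set.Ioi 0)) := by
    intro S _
    rw [integrable_indicator_iff measurableSet_Ioc]
    refine (integrableOn_const_iff).mpr (Or.inr ?_)
    exact lt_of_le_of_lt (Measure.restrict_apply_le _ _) measure_Ioc_lt_top
  rw [integral_finset_sum _ hint]
  have heach : ∀ S ∈ A.powerset,
      (∫ y in Set.Ioi (0:ℝ),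
        Set.indicator (Set.Ioc 0 (∑ a ∈ S, σ a)) (fun _ => sharedInfo A H S) y)
      = (∑ a ∈ S, σ a) * sharedInfo A H S := by
    intro S hS
    rw [integral_indicator measurableSet_Ioc, Measure.restrict_restrict measurableSet_Ioc,
        Set.inter_eq_left.mpr Set.Ioc_subset_Ioi_self, setIntegral_const, Real.volume_real_Ioc_of_le (hs0 S hS),
        smul_eq_mul, sub_zero]
  rw [Finset.sum_congr rfl heach]
  have h2 : ∀ S ∈ A.powerset,
      (∑ a ∈ S, σ a) * sharedInfo A H S = ∑ a ∈ S, σ a * sharedInfo A H S :=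
    fun S _ => Finset.sum_mul _ _ _
  rw [Finset.sum_congr rfl h2]
  rw [Finset.sum_comm' (t' := A) (s' := fun a => A.powerset.filter (fun S => a ∈ S))
    (fun S a => by
      simp only [mem_filter, mem_powerset]
      constructor
      · rintro ⟨hSA, haS⟩; exact ⟨⟨hSA, haS⟩, hSA haS⟩
      · rintro ⟨⟨hSA, haS⟩, _⟩; exact ⟨hSA, haS⟩)]
  apply Finset.sum_congr rfl
  intro a ha
  rw [← Finset.mul_sum, sum_sharedInfo_mem A H hH0 ha]
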